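/- arXiv:0805.0154 — 3 statements merged into one kernel-verified Lean document; each statement's English description precedes it below -/
import Mathlib

section
/- Let m be a universal probability. Then the Shannon entropy H(m) = -∑_{s∈{0,1}*} m(s) log₂ m(s) diverges to infinity, i.e., the partial sums are unbounded. -/
open Filter Topology

namespace Paper

/-- Finite binary strings. -/
abbrev Str := List Bool

/-- A computer: a partial recursive function on binary strings with prefix-free domain. -/
structure Computer where
  f : Str →. Str
  partrec : Partrec f
  prefixFree : ∀ p q : Str, (f p).Dom → (f q).Dom → p <+: q → p = q

/-- An optimal computer (universal self-delimiting Turing machine). -/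
structure OptimalComputer extends Computer where
  optimal : ∀ C : Computer, ∃ sim : ℕ, ∀ p s, s ∈ C.f p →
    ∃ p', s ∈ toComputer.f p' ∧ p'.length ≤ p.length + sim

/-- Prefix-free Kolmogorov complexity (program-size complexity) w.r.t. `U`. -/
noncomputable def Kc (U : OptimalComputer) (s : Str) : ℕ :=
  sInf {n | ∃ p : Str, p.length = n ∧ s ∈ U.f p}

/-- A semi-measure on binary strings: values in [0,1] with all finite partial sums ≤ 1. -/
def SemiMeasure (r : Str → ℝ) : Prop :=
  (∀ s, 0 ≤ r s ∧ r s ≤ 1) ∧ ∀ F : Finset Str, ∑ s ∈ F, r s ≤ 1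

/-- Lower-computability: approximability from below by a total recursive rational function. -/
def LowerComputable (r : Str → ℝ) : Prop :=
  ∃ f : ℕ → Str → ℚ, Computable₂ f ∧
    ∀ s : Str, (∀ n : ℕ, 0 ≤ f n s ∧ (f n s : ℝ) ≤ r s) ∧
      Tendsto (fun n => (f n s : ℝ)) atTop (nhds (r s))

/-- A lower-computable semi-measure. -/
def LCSemiMeasure (r : Str → ℝ) : Prop := SemiMeasure r ∧ LowerComputable r

/-- A universal probability: a lower-computable semi-measure dominating all
lower-computable semi-measures up to a positive multiplicative constant. -/
def UniversalProb (m : Str → ℝ) : Prop :=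
  LCSemiMeasure m ∧ ∀ r : Str → ℝ, LCSemiMeasure r → ∃ c : ℝ, 0 < c ∧ ∀ s, c * r s ≤ m s

/-- The first `n` bits of the base-two expansion of `T mod 1`
(the expansion with infinitely many zeros). -/
noncomputable def binPrefix (T : ℝ) (n : ℕ) : Str :=
  (List.range n).map (fun i => decide (⌊Int.fract T * 2 ^ (i + 1)⌋ % 2 = 1))

/-- A real is right-computable if it is the limit from above of a recursive
sequence of rationals. -/
def RightComputableReal (T : ℝ) : Prop :=
  ∃ g : ℕ → ℚ, Computable g ∧ (∀ n, T ≤ (g n : ℝ)) ∧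
    Tendsto (fun n => (g n : ℝ)) atTop (nhds T)

/-- A real is left-computable if its negation is right-computable. -/
def LeftComputableReal (T : ℝ) : Prop := RightComputableReal (-T)

/-- A computable real number. -/
def ComputableReal (T : ℝ) : Prop :=
  ∃ f : ℕ → ℚ, Computable f ∧ ∀ n : ℕ, |T - (f n : ℝ)| < (2 : ℝ)⁻¹ ^ n

/-- A recursively enumerable set of binary strings. -/
def REset (A : Set Str) : Prop :=
  ∃ g : Str →. Unit, Partrec g ∧ ∀ s, (g s).Dom ↔ s ∈ A

/-- `T` is weakly Chaitin `D`-random. -/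
noncomputable def WeaklyChaitinDRandom (U : OptimalComputer) (D T : ℝ) : Prop :=
  ∃ c : ℕ, ∀ n : ℕ, D * n - c ≤ Kc U (binPrefix T n)

/-- `T` is `D`-compressible. -/
noncomputable def DCompressible (U : OptimalComputer) (D T : ℝ) : Prop :=
  Filter.atTop.limsup (fun n : ℕ => (Kc U (binPrefix T n) : ℝ) / n) ≤ D



/-! ### Auxiliary construction: an explicit heavy-tailed lower-computable semi-measure -/

section Aux

open Encodable

/-- Denominator `2^L * (L+1) * (L+2)`. -/
def DD (L : ℕ) : ℕ := 2 ^ L * ((L + 1) * (L + 2))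

lemma DD_pos (L : ℕ) : 0 < DD L := by unfold DD; positivity

/-- The rational `1 / DD L`. -/
def qq (L : ℕ) : ℚ := ⟨1, DD L, (DD_pos L).ne', by simp⟩

lemma qq_num (L : ℕ) : (qq L).num = 1 := rfl
lemma qq_den (L : ℕ) : (qq L).den = DD L := rfl

/-- The original encoding `ℚ → ℕ` from `Rat.instEncodable`. -/
noncomputable def e0 : ℚ → ℕ := @encode ℚ Rat.instEncodable

lemma e0_eq (x : ℚ) : e0 x = Nat.pair (@encode ℤ _ x.num) x.den := rfl

/-- `Bool` test: does `k` (with `2 ≤ k`) divide both `n` and `d`? -/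
def inner (n d k : ℕ) : Bool := (2 ≤ k : Bool) && (n % k == 0) && (d % k == 0)

/-- membership test for the range of `e0`. -/
def chi (y : ℕ) : Bool :=
  (0 < y.unpair.2 : Bool) &&
    (((List.range (y.unpair.2 + 1)).filterMap
      (fun k => bif inner ((y.unpair.1 + 1) / 2) y.unpair.2 k then some k else none)).length == 0)

/-- A primitive-recursive presentation of `encode (qq L)`. -/
def EE (L : ℕ) : ℕ :=
  ((List.range (Nat.pair 2 (DD L))).filterMap
      (fun y => bif chi y then some y else none)).length

lemma length_filterMap_eq_countP {α} (p : α → Bool) (l : List α) :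
    (l.filterMap (fun a => bif p a then some a else none)).length = l.countP p := by
  induction l with
  | nil => rfl
  | cons a l ih =>
      rw [List.filterMap_cons, List.countP_cons]
      cases h : p a <;> simp [h, ih]

lemma natAbs_ofNat_int (a : ℕ) : (Denumerable.ofNat ℤ a).natAbs = (a + 1) / 2 := by
  have h1 : Denumerable.ofNat ℤ a
      = Sum.elim Int.ofNat Int.negSucc (Equiv.boolProdEquivSum ℕ (Nat.boddDiv2 a)) := by rw [Nat.boddDiv2_eq]; rfl
  rw [h1, Nat.boddDiv2_eq]
  rcases Nat.bodd_add_div2 a with h3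
  cases hb : a.bodd <;> rw [hb] at h3 <;>
    simp [Equiv.boolProdEquivSum] at h3 ⊢ <;> omega

lemma coprime_iff_no_divisor {n d : ℕ} (hd : 0 < d) :
    Nat.Coprime n d ↔ ∀ k, k < d + 1 → ¬(2 ≤ k ∧ k ∣ n ∧ k ∣ d) := by
  constructor
  · intro hc k _ hk
    obtain ⟨h2, hkn, hkd⟩ := hk
    have h1 : k ∣ Nat.gcd n d := Nat.dvd_gcd hkn hkd
    rw [hc] at h1
    have := Nat.le_of_dvd one_pos h1
    omega
  · intro h
    by_contra hne
    set g := Nat.gcd n d with hg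
    have hgpos : 0 < g := Nat.gcd_pos_of_pos_right n hd
    have hg2 : 2 ≤ g := by
      rcases Nat.lt_or_ge g 2 with h' | h'
      · exfalso; apply hne; have : g = 1 := by omega
        exact this
      · exact h'
    have hgd : g ∣ d := Nat.gcd_dvd_right n d
    exact h g (by have := Nat.le_of_dvd hd hgd; omega)
      ⟨hg2, Nat.gcd_dvd_left n d, hgd⟩

lemma mem_range_e0_iff (y : ℕ) :
    y ∈ Set.range e0 ↔
      0 < y.unpair.2 ∧ Nat.Coprime ((y.unpair.1 + 1) / 2) y.unpair.2 := by
  constructor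
  · rintro ⟨r, rfl⟩
    rw [e0_eq, Nat.unpair_pair]
    refine ⟨r.pos, ?_⟩
    have h := natAbs_ofNat_int (@encode ℤ _ r.num)
    rw [Denumerable.ofNat_encode] at h
    simpa [← h] using r.reduced
  · rintro ⟨hd, hc⟩
    refine ⟨⟨Denumerable.ofNat ℤ y.unpair.1, y.unpair.2, hd.ne', ?_⟩, ?_⟩
    · rwa [natAbs_ofNat_int]
    · show Nat.pair (@encode ℤ _ (Denumerable.ofNat ℤ y.unpair.1)) y.unpair.2 = y
      rw [Denumerable.encode_ofNat, Nat.pair_unpair]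

lemma chi_eq_decide (y : ℕ) :
    chi y = @decide (y ∈ Set.range e0) (@Encodable.decidableRangeEncode ℚ Rat.instEncodable y) := by
  letI : DecidablePred (· ∈ Set.range e0) := @Encodable.decidableRangeEncode ℚ Rat.instEncodable
  have hiff := mem_range_e0_iff y
  by_cases hy : y ∈ Set.range e0
  · rw [decide_eq_true hy]
    obtain ⟨hd, hc⟩ := hiff.mp hy
    rw [chi]
    have h0 : ((List.range (y.unpair.2 + 1)).filterMap
        (fun k => bif inner ((y.unpair.1 + 1) / 2) y.unpair.2 k then some k else none)).length = 0 := by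
      rw [length_filterMap_eq_countP, List.countP_eq_zero]
      intro k hk
      rw [List.mem_range] at hk
      have := (coprime_iff_no_divisor hd).mp hc k hk
      simp only [inner, Bool.and_eq_true, decide_eq_true_eq, beq_iff_eq] at *
      rintro ⟨⟨h2, hn⟩, hdd⟩
      exact this ⟨h2, Nat.dvd_of_mod_eq_zero hn, Nat.dvd_of_mod_eq_zero hdd⟩
    simp [hd, h0]
  · rw [decide_eq_false hy]
    rw [chi]
    rcases Nat.eq_zero_or_pos y.unpair.2 with h0 | hd
    · simp [h0]
    · have hnc : ¬ Nat.Coprime ((y.unpair.1 + 1) / 2) y.unpair.2 := fun hc => hy (hiff.mpr ⟨hd, hc⟩)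
      rw [(coprime_iff_no_divisor hd)] at hnc
      push_neg at hnc
      obtain ⟨k, hk1, hk2, hk3, hk4⟩ := hnc
      have : ((List.range (y.unpair.2 + 1)).filterMap
          (fun k => bif inner ((y.unpair.1 + 1) / 2) y.unpair.2 k then some k else none)).length ≠ 0 := by
        rw [length_filterMap_eq_countP, ← Nat.pos_iff_ne_zero, List.countP_pos_iff]
        refine ⟨k, List.mem_range.mpr hk1, ?_⟩
        simp [inner, hk2, Nat.mod_eq_zero_of_dvd hk3, Nat.mod_eq_zero_of_dvd hk4]
      simp [this]

lemma EE_eq_encode (L : ℕ) :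
    EE L = @encode ℚ Primcodable.toEncodable (qq L) := by
  have henc : @encode ℚ Primcodable.toEncodable (qq L) =
      (List.range (e0 (qq L))).countP
        (fun y => @decide (y ∈ Set.range e0) (@Encodable.decidableRangeEncode ℚ Rat.instEncodable y)) := rfl
  have he0 : e0 (qq L) = Nat.pair 2 (DD L) := by
    rw [e0_eq, qq_num, qq_den]
    rfl
  rw [henc, he0, EE, length_filterMap_eq_countP]
  exact List.countP_congr fun y _ => by rw [chi_eq_decide y]

lemma primrec_pow2 : Primrec₂ ((· ^ ·) : ℕ → ℕ → ℕ) := Primrec₂.unpaired'.mp Nat.Primrec.pow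

lemma primrec_DD : Primrec DD := by
  unfold DD
  exact Primrec.nat_mul.comp (primrec_pow2.comp (Primrec.const 2) Primrec.id)
    (Primrec.nat_mul.comp (Primrec.succ.comp Primrec.id)
      (Primrec.nat_add.comp Primrec.id (Primrec.const 2)))

lemma primrec_inner : Primrec (fun p : (ℕ × ℕ) × ℕ => inner p.1.1 p.1.2 p.2) := by
  unfold inner
  have h1 : Primrec (fun p : (ℕ × ℕ) × ℕ => (2 ≤ p.2 : Bool)) :=
    (Primrec.nat_le.comp (Primrec.const 2) Primrec.snd).decide
  have h2 : Primrec (fun p : (ℕ × ℕ) × ℕ => (p.1.1 % p.2 == 0 : Bool)) :=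
    Primrec.beq.comp (Primrec.nat_mod.comp (Primrec.fst.comp Primrec.fst) Primrec.snd)
      (Primrec.const 0)
  have h3 : Primrec (fun p : (ℕ × ℕ) × ℕ => (p.1.2 % p.2 == 0 : Bool)) :=
    Primrec.beq.comp (Primrec.nat_mod.comp (Primrec.snd.comp Primrec.fst) Primrec.snd)
      (Primrec.const 0)
  exact (Primrec.dom_bool₂ (· && ·)).comp
    ((Primrec.dom_bool₂ (· && ·)).comp h1 h2) h3

lemma primrec_chi : Primrec chi := by
  unfold chi
  have hu2 : Primrec (fun y : ℕ => y.unpair.2) := Primrec.snd.comp Primrec.unpair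
  have hu1 : Primrec (fun y : ℕ => y.unpair.1) := Primrec.fst.comp Primrec.unpair
  have hn : Primrec (fun y : ℕ => (y.unpair.1 + 1) / 2) :=
    Primrec.nat_div.comp (Primrec.succ.comp hu1) (Primrec.const 2)
  have hlist : Primrec (fun y : ℕ => List.range (y.unpair.2 + 1)) :=
    Primrec.list_range.comp (Primrec.succ.comp hu2)
  have hfm : Primrec (fun y : ℕ =>
      (List.range (y.unpair.2 + 1)).filterMap
        (fun k => bif inner ((y.unpair.1 + 1) / 2) y.unpair.2 k then some k else none)) := by
    apply Primrec.listFilterMap hlist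
    have hinner : Primrec (fun p : ℕ × ℕ => inner ((p.1.unpair.1 + 1) / 2) p.1.unpair.2 p.2) :=
      primrec_inner.comp (Primrec.pair (Primrec.pair (hn.comp Primrec.fst) (hu2.comp Primrec.fst)) Primrec.snd)
    exact (Primrec.cond hinner (Primrec.option_some.comp Primrec.snd) (Primrec.const none)).to₂
  have h1 : Primrec (fun y : ℕ => (0 < y.unpair.2 : Bool)) :=
    (Primrec.nat_lt.comp (Primrec.const 0) hu2).decide
  have h2 : Primrec (fun y : ℕ =>
      (((List.range (y.unpair.2 + 1)).filterMap
        (fun k => bif inner ((y.unpair.1 + 1) / 2) y.unpair.2 k then some k else none)).length == 0 : Bool)) :=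
    Primrec.beq.comp (Primrec.list_length.comp hfm) (Primrec.const 0)
  exact (Primrec.dom_bool₂ (· && ·)).comp h1 h2

lemma primrec_EE : Primrec EE := by
  unfold EE
  have hlist : Primrec (fun L : ℕ => List.range (Nat.pair 2 (DD L))) :=
    Primrec.list_range.comp (Primrec₂.natPair.comp (Primrec.const 2) primrec_DD)
  refine Primrec.list_length.comp (Primrec.listFilterMap hlist ?_)
  exact (Primrec.cond (primrec_chi.comp Primrec.snd)
    (Primrec.option_some.comp Primrec.snd) (Primrec.const none)).to₂

/-- The approximating function for our semi-measure. -/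
def ff (_ : ℕ) (s : Str) : ℚ := Denumerable.ofNat ℚ (EE s.length)

lemma ff_eq (n : ℕ) (s : Str) : ff n s = qq s.length := by
  rw [ff, EE_eq_encode]
  exact Denumerable.ofNat_encode _

lemma computable_ff : Computable₂ ff := by
  have : Primrec₂ ff := by
    unfold ff
    exact ((Primrec.ofNat ℚ).comp (primrec_EE.comp
      (Primrec.list_length.comp Primrec.snd))).to₂
  exact this.to_comp

/-- The heavy-tailed semi-measure. -/
noncomputable def rr (s : Str) : ℝ := ((qq s.length : ℚ) : ℝ)

lemma DD_cast (n : ℕ) : ((DD n : ℕ) : ℝ) = 2 ^ n * ((n + 1) * (n + 2)) := by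
  unfold DD; push_cast; ring

lemma rr_eq (s : Str) : rr s = 1 / ((DD s.length : ℕ) : ℝ) := by
  rw [rr, Rat.cast_def, qq_num, qq_den]
  norm_num

lemma rr_pos (s : Str) : 0 < rr s := by
  rw [rr_eq]
  have := DD_pos s.length
  positivity

lemma rr_le_one (s : Str) : rr s ≤ 1 := by
  rw [rr_eq]
  rw [div_le_one (by exact_mod_cast DD_pos s.length)]
  exact_mod_cast DD_pos s.length

/-- all strings of length `n` -/
def lenFinset : ℕ → Finset Str
  | 0 => {[]}
  | n + 1 => (lenFinset n).biUnion (fun s => {true :: s, false :: s})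

lemma mem_lenFinset : ∀ {n : ℕ} {s : Str}, s ∈ lenFinset n ↔ s.length = n
  | 0, s => by simp [lenFinset, List.length_eq_zero_iff]
  | (n+1), s => by
      simp only [lenFinset, Finset.mem_biUnion, Finset.mem_insert, Finset.mem_singleton]
      constructor
      · rintro ⟨t, ht, rfl | rfl⟩ <;> simp [mem_lenFinset.mp ht]
      · intro h
        cases s with
        | nil => simp at h
        | cons b t =>
            refine ⟨t, mem_lenFinset.mpr (by simpa using h), ?_⟩
            cases b <;> simp

lemma lenFinset_disj {n : ℕ} : ∀ a ∈ lenFinset n, ∀ b ∈ lenFinset n, a ≠ b →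
    Disjoint ({true :: a, false :: a} : Finset Str) {true :: b, false :: b} := by
  intro a _ b _ hab
  rw [Finset.disjoint_left]
  intro s hs1 hs2
  simp only [Finset.mem_insert, Finset.mem_singleton] at hs1 hs2
  rcases hs1 with rfl | rfl <;> rcases hs2 with h | h <;>
    simp_all

lemma card_lenFinset : ∀ n : ℕ, (lenFinset n).card = 2 ^ n
  | 0 => rfl
  | (n+1) => by
      rw [lenFinset, Finset.card_biUnion lenFinset_disj]
      have h2 : ∀ s ∈ lenFinset n, ({true :: s, false :: s} : Finset Str).card = 2 := by
        intro s _
        rw [Finset.card_insert_of_notMem (by simp), Finset.card_singleton]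
      rw [Finset.sum_congr rfl h2, Finset.sum_const, card_lenFinset n, smul_eq_mul, pow_succ]

lemma sum_inv_aux : ∀ N : ℕ, ∑ n ∈ Finset.range N, (1 : ℝ) / ((n + 1) * (n + 2))
    = 1 - 1 / (N + 1)
  | 0 => by simp
  | (N + 1) => by
      rw [Finset.sum_range_succ, sum_inv_aux N]
      have h1 : ((N : ℝ) + 1) ≠ 0 := by positivity
      have h2 : ((N : ℝ) + 2) ≠ 0 := by positivity
      push_cast
      field_simp
      ring

lemma rr_sum_le (F : Finset Str) : ∑ s ∈ F, rr s ≤ 1 := by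
  classical
  set N := F.sup List.length + 1 with hN
  have hmap : ∀ s ∈ F, s.length ∈ Finset.range N := fun s hs =>
    Finset.mem_range.mpr (Nat.lt_succ_of_le (Finset.le_sup (f := List.length) hs))
  rw [← Finset.sum_fiberwise_of_maps_to hmap]
  have hinner : ∀ n ∈ Finset.range N,
      ∑ s ∈ F.filter (fun s => s.length = n), rr s ≤ (1 : ℝ) / ((n + 1) * (n + 2)) := by
    intro n _
    have hval : ∀ s ∈ F.filter (fun s => s.length = n), rr s = 1 / ((DD n : ℕ) : ℝ) := by
      intro s hs
      rw [rr_eq, (Finset.mem_filter.mp hs).2]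
    rw [Finset.sum_congr rfl hval, Finset.sum_const, nsmul_eq_mul]
    have hcard : (F.filter (fun s => s.length = n)).card ≤ 2 ^ n := by
      rw [← card_lenFinset n]
      apply Finset.card_le_card
      intro s hs
      exact mem_lenFinset.mpr (Finset.mem_filter.mp hs).2
    have hDD : (0:ℝ) < ((DD n : ℕ) : ℝ) := by exact_mod_cast DD_pos n
    calc ((F.filter (fun s => s.length = n)).card : ℝ) * (1 / ((DD n : ℕ) : ℝ))
        ≤ (2 ^ n : ℝ) * (1 / ((DD n : ℕ) : ℝ)) := by
          apply mul_le_mul_of_nonneg_right _ (by positivity)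
          exact_mod_cast hcard
      _ = (1 : ℝ) / ((n + 1) * (n + 2)) := by
          rw [DD_cast]
          have h2 : (0:ℝ) < 2 ^ n := by positivity
          field_simp
  calc ∑ n ∈ Finset.range N, ∑ s ∈ F.filter (fun s => s.length = n), rr s
      ≤ ∑ n ∈ Finset.range N, (1 : ℝ) / ((n + 1) * (n + 2)) := Finset.sum_le_sum hinner
    _ = 1 - 1 / (N + 1) := sum_inv_aux N
    _ ≤ 1 := by
        have : (0:ℝ) < (N:ℝ) + 1 := by positivity
        have : (0:ℝ) ≤ 1 / ((N:ℝ) + 1) := by positivity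
        linarith

lemma lcsemimeasure_rr : LCSemiMeasure rr := by
  refine ⟨⟨fun s => ⟨(rr_pos s).le, rr_le_one s⟩, rr_sum_le⟩, ?_⟩
  refine ⟨ff, computable_ff, fun s => ⟨fun n => ?_, ?_⟩⟩
  · constructor
    · rw [ff_eq]
      have : (0:ℝ) ≤ ((qq s.length : ℚ) : ℝ) := by
        rw [show ((qq s.length : ℚ) : ℝ) = rr s from rfl]
        exact (rr_pos s).le
      exact_mod_cast this
    · rw [ff_eq]
      exact le_of_eq rfl
  · have : (fun n : ℕ => ((ff n s : ℚ) : ℝ)) = fun _ => rr s := by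
      funext n; rw [ff_eq]; rfl
    rw [this]
    exact tendsto_const_nhds

end Aux

/-- The Shannon entropy `-∑ s, m s * log₂ (m s)` of any universal probability `m`
diverges to infinity: its partial sums are unbounded. -/
theorem shannon_entropy_of_universal_diverges (m : Str → ℝ) (hm : UniversalProb m) :
    ∀ B : ℝ, ∃ F : Finset Str, B ≤ ∑ s ∈ F, -(m s * Real.logb 2 (m s)) := by
  classical
  intro B
  obtain ⟨⟨⟨hm01, hmsum⟩, _⟩, hdom⟩ := hm
  obtain ⟨c₀, hc₀pos, hc₀⟩ := hdom rr lcsemimeasure_rr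
  set c := min c₀ 1 with hc
  have hcpos : 0 < c := lt_min hc₀pos one_pos
  have hcm : ∀ s, c * rr s ≤ m s := fun s =>
    le_trans (mul_le_mul_of_nonneg_right (min_le_left _ _) (rr_pos s).le) (hc₀ s)
  -- every entropy term is nonnegative
  have hterm0 : ∀ s : Str, 0 ≤ -(m s * Real.logb 2 (m s)) := by
    intro s
    rcases eq_or_lt_of_le (hm01 s).1 with h0 | hpos
    · rw [← h0]; simp
    · have hlog : Real.logb 2 (m s) ≤ 0 :=
        Real.logb_nonpos (by norm_num) (hm01 s).1 (hm01 s).2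
      have : m s * Real.logb 2 (m s) ≤ 0 := mul_nonpos_of_nonneg_of_nonpos (hm01 s).1 hlog
      linarith
  -- the strings of length n on which m is small
  set T : ℕ → Finset Str := fun n =>
    (lenFinset n).filter (fun s => m s ≤ ((2:ℝ)⁻¹) ^ (n - 1)) with hT
  have hTlen : ∀ n, ∀ s ∈ T n, s.length = n := fun n s hs =>
    mem_lenFinset.mp (Finset.mem_filter.mp hs).1
  -- cardinality of T n
  have hTcard : ∀ n : ℕ, 1 ≤ n → (2:ℝ) ^ (n - 1) ≤ ((T n).card : ℝ) := by
    intro n hn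
    set U := lenFinset n \ T n with hU
    have hUsum : ∀ s ∈ U, ((2:ℝ)⁻¹) ^ (n - 1) ≤ m s := by
      intro s hs
      rw [hU, Finset.mem_sdiff] at hs
      have hns : ¬ (m s ≤ (2:ℝ)⁻¹ ^ (n - 1)) := by
        intro hle
        exact hs.2 (Finset.mem_filter.mpr ⟨hs.1, hle⟩)
      linarith [lt_of_not_ge hns]
    have hUle : ((U.card : ℝ)) * ((2:ℝ)⁻¹) ^ (n - 1) ≤ 1 := by
      calc (U.card : ℝ) * (2:ℝ)⁻¹ ^ (n - 1) = ∑ _s ∈ U, (2:ℝ)⁻¹ ^ (n - 1) := by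
            rw [Finset.sum_const, nsmul_eq_mul]
        _ ≤ ∑ s ∈ U, m s := Finset.sum_le_sum hUsum
        _ ≤ 1 := hmsum U
    have hpow : (0:ℝ) < (2:ℝ)⁻¹ ^ (n - 1) := by positivity
    have hprod : ((2:ℝ)⁻¹) ^ (n - 1) * (2:ℝ) ^ (n - 1) = 1 := by
      rw [← mul_pow]; norm_num
    have hUcard : (U.card : ℝ) ≤ 2 ^ (n - 1) := by
      nlinarith [hUle, hpow, hprod]
    have hTsub : T n ⊆ lenFinset n := Finset.filter_subset _ _
    have hTU : (T n).card + U.card = 2 ^ n := by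
      rw [hU, Finset.card_sdiff_of_subset hTsub]
      have hle := Finset.card_le_card hTsub
      rw [card_lenFinset] at hle ⊢
      omega
    have hcast : ((T n).card : ℝ) + (U.card : ℝ) = (2:ℝ) ^ n := by
      exact_mod_cast hTU
    have e2 : (2:ℝ) ^ n = 2 * 2 ^ (n - 1) := by
      rw [← pow_succ']
      congr 1
      omega
    linarith
  -- lower bound for the entropy over T n
  have hsumT : ∀ n : ℕ, 3 ≤ n →
      c / 8 * (1 / ((n:ℝ) + 1)) ≤ ∑ s ∈ T n, -(m s * Real.logb 2 (m s)) := by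
    intro n hn
    have hn3 : (3:ℝ) ≤ (n:ℝ) := by exact_mod_cast hn
    have hDDpos : (0:ℝ) < ((DD n : ℕ) : ℝ) := by exact_mod_cast DD_pos n
    have hmlow : ∀ s ∈ T n, c / ((DD n : ℕ) : ℝ) ≤ m s := by
      intro s hs
      have h1 := hcm s
      rw [rr_eq, hTlen n s hs] at h1
      calc c / ((DD n : ℕ) : ℝ) = c * (1 / ((DD n : ℕ) : ℝ)) := by rw [mul_one_div]
        _ ≤ m s := h1
    have hlowpos : 0 < c / ((DD n : ℕ) : ℝ) := div_pos hcpos hDDpos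
    have hterm : ∀ s ∈ T n,
        ((n:ℝ) - 1) * (c / ((DD n : ℕ) : ℝ)) ≤ -(m s * Real.logb 2 (m s)) := by
      intro s hs
      have hml := hmlow s hs
      have hmpos : 0 < m s := lt_of_lt_of_le hlowpos hml
      have hup : m s ≤ (2:ℝ)⁻¹ ^ (n - 1) := (Finset.mem_filter.mp hs).2
      have hlog : Real.logb 2 (m s) ≤ -(((n - 1 : ℕ)) : ℝ) := by
        have h1 : Real.logb 2 (m s) ≤ Real.logb 2 ((2:ℝ)⁻¹ ^ (n - 1)) :=
          Real.logb_le_logb_of_le (by norm_num) hmpos hup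
        rw [Real.logb_pow, Real.logb_inv, Real.logb_self_eq_one (by norm_num)] at h1
        simpa using h1
      have hcast : (((n - 1 : ℕ)) : ℝ) = (n:ℝ) - 1 := by
        have h1 : 1 ≤ n := by omega
        push_cast [h1]
        ring
      rw [hcast] at hlog
      have hkey : ((n:ℝ) - 1) * (c / ((DD n : ℕ) : ℝ)) ≤ (-Real.logb 2 (m s)) * m s :=
        mul_le_mul (by linarith) hml hlowpos.le (by linarith)
      nlinarith [hkey]
    have hsum1 := Finset.card_nsmul_le_sum (T n)
      (fun s => -(m s * Real.logb 2 (m s))) _ hterm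
    rw [nsmul_eq_mul] at hsum1
    have hcard := hTcard n (by omega)
    have hbnd : (2:ℝ) ^ (n - 1) * (((n:ℝ) - 1) * (c / ((DD n : ℕ) : ℝ)))
        ≤ ((T n).card : ℝ) * (((n:ℝ) - 1) * (c / ((DD n : ℕ) : ℝ))) := by
      apply mul_le_mul_of_nonneg_right hcard
      have : (0:ℝ) ≤ (n:ℝ) - 1 := by linarith
      positivity
    have halg : c / 8 * (1 / ((n:ℝ) + 1))
        ≤ (2:ℝ) ^ (n - 1) * (((n:ℝ) - 1) * (c / ((DD n : ℕ) : ℝ))) := by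
      rw [DD_cast]
      have e2 : (2:ℝ) ^ n = 2 * 2 ^ (n - 1) := by
        rw [← pow_succ']
        congr 1
        omega
      rw [e2]
      have hA : (0:ℝ) < (2:ℝ) ^ (n - 1) := by positivity
      set A := (2:ℝ) ^ (n - 1)
      have hval : A * (((n:ℝ) - 1) * (c / (2 * A * (((n:ℝ) + 1) * ((n:ℝ) + 2)))))
          = ((n:ℝ) - 1) * c / (2 * (((n:ℝ) + 1) * ((n:ℝ) + 2))) := by
        field_simp
      rw [hval,
        show c / 8 * (1 / ((n:ℝ) + 1)) = c / (8 * ((n:ℝ) + 1)) from by rw [div_mul_div_comm, mul_one],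
        div_le_div_iff₀ (by positivity) (by positivity)]
      nlinarith [hcpos, hn3,
        mul_nonneg (mul_nonneg hcpos.le (show (0:ℝ) ≤ (n:ℝ) + 1 by linarith))
          (show (0:ℝ) ≤ 3 * (n:ℝ) - 6 by linarith)]
    linarith
  -- choose N
  have hdiv := Real.tendsto_sum_range_one_div_nat_succ_atTop
  obtain ⟨N, hN3, hNS⟩ :=
    ((Filter.eventually_ge_atTop 3).and
      (hdiv.eventually_ge_atTop (8 * B / c + 2))).exists
  -- the finite set
  refine ⟨(Finset.Ico 3 N).biUnion T, ?_⟩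
  have hdisj : (↑(Finset.Ico 3 N) : Set ℕ).PairwiseDisjoint T :=
    fun a _ b _ hab => Finset.disjoint_left.mpr
      (fun {s} hsa hsb => hab ((hTlen a s hsa).symm.trans (hTlen b s hsb)))
  rw [Finset.sum_biUnion hdisj]
  have hstep : ∑ n ∈ Finset.Ico 3 N, c / 8 * (1 / ((n:ℝ) + 1))
      ≤ ∑ n ∈ Finset.Ico 3 N, ∑ s ∈ T n, -(m s * Real.logb 2 (m s)) :=
    Finset.sum_le_sum fun n hn => hsumT n (Finset.mem_Ico.mp hn).1
  have hIco : ∑ n ∈ Finset.Ico 3 N, (1 / ((n:ℝ) + 1))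
      = (∑ i ∈ Finset.range N, (1 / ((i:ℝ) + 1)))
        - ∑ i ∈ Finset.range 3, (1 / ((i:ℝ) + 1)) :=
    Finset.sum_Ico_eq_sub _ hN3
  have hS3 : ∑ i ∈ Finset.range 3, (1 / ((i:ℝ) + 1)) ≤ 2 := by
    rw [Finset.sum_range_succ, Finset.sum_range_succ, Finset.sum_range_one]
    norm_num
  have hBbound : B ≤ ∑ n ∈ Finset.Ico 3 N, c / 8 * (1 / ((n:ℝ) + 1)) := by
    rw [← Finset.mul_sum, hIco]
    have hSN : 8 * B / c + 2 ≤ ∑ i ∈ Finset.range N, (1 / ((i:ℝ) + 1)) := hNS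
    have h8 : 8 * B / c * c = 8 * B := by field_simp
    nlinarith [hSN, hS3, hcpos]
  linarith


end Paper
end

section
/- Let A be an infinite recursively enumerable subset of {0,1}* and f : ℕ⁺ → ℕ a total recursive function with f(n) → ∞. Then ∑_{p : U(p) ∈ A} f(|p|) 2^{-|p|} diverges to infinity, where U is an optimal (universal self-delimiting) computer. -/
open Filter Topology

namespace Paper

section DivergenceAux

open Nat.Partrec (Code)
open Nat.Partrec.Code

/-! #### bit string values -/

private def strVal (w : Str) : ℕ := w.foldr (fun b acc => 2 * acc + cond b 1 0) 0

private lemma strVal_cons (b : Bool) (w : Str) :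
    strVal (b :: w) = 2 * strVal w + cond b 1 0 := rfl

private lemma strVal_lt : ∀ w : Str, strVal w < 2 ^ w.length := by
  intro w
  induction w with
  | nil => simp [strVal]
  | cons b w ih =>
      rw [strVal_cons]
      have h2 : (2:ℕ) ^ (b :: w).length = 2 * 2 ^ w.length := by
        simp [List.length_cons, pow_succ]; ring
      rw [h2]; cases b <;> simp <;> omega

private lemma strVal_injOn : ∀ (w v : Str), w.length = v.length → strVal w = strVal v → w = v := by
  intro w
  induction w with
  | nil => intro v hl _; cases v with
    | nil => rfl
    | cons c v' => simp at hl
  | cons b w ih =>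
      intro v hl hv
      cases v with
      | nil => simp at hl
      | cons c v' =>
          rw [strVal_cons, strVal_cons] at hv
          have hb : b = c := by cases b <;> cases c <;> simp at hv ⊢ <;> omega
          subst hb
          have hsv : strVal w = strVal v' := by cases b <;> simp at hv <;> omega
          rw [ih v' (by simpa using hl) hsv]

private def strEnc (n i : ℕ) : Str := (List.range n).map i.testBit

private lemma strEnc_length (n i : ℕ) : (strEnc n i).length = n := by simp [strEnc]

private lemma strVal_strEnc : ∀ (n i : ℕ), strVal (strEnc n i) = i % 2 ^ n := by
  intro n
  induction n with
  | zero => intro i; simp [strEnc, strVal, Nat.mod_one]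
  | succ n ih =>
      intro i
      have h1 : strEnc (n+1) i = i.testBit 0 :: strEnc n (i / 2) := by
        simp only [strEnc, List.range_succ_eq_map, List.map_cons, List.map_map]
        congr 1
        apply List.map_congr_left
        intro j _
        simp [Function.comp, Nat.testBit_succ]
      rw [h1, strVal_cons, ih]
      have h2 : (cond (i.testBit 0) 1 0 : ℕ) = i % 2 := by
        rw [Nat.testBit_zero]
        rcases Nat.mod_two_eq_zero_or_one i with h | h <;> simp [h]
      have h3 : (2:ℕ) ^ (n+1) = 2 * 2 ^ n := by rw [pow_succ]; ring
      rw [h2, h3, Nat.mod_mul]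
      omega

/-! #### program shapes -/

private def progShape (m : ℕ) (w : Str) : Str := List.replicate m true ++ false :: w

private lemma progShape_length (m : ℕ) (w : Str) :
    (progShape m w).length = m + 1 + w.length := by
  simp [progShape]; omega

private lemma progShape_succ (m : ℕ) (w : Str) :
    progShape (m+1) w = true :: progShape m w := by
  simp [progShape, List.replicate_succ]

private lemma progShape_idxOf : ∀ (m : ℕ) (w : Str), (progShape m w).idxOf false = m := by
  intro m
  induction m with
  | zero => intro w; simp [progShape, List.idxOf_cons_self]
  | succ m ih =>
      intro w
      rw [progShape_succ, List.idxOf_cons_ne _ (by decide), ih]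

private lemma progShape_drop : ∀ (m : ℕ) (w : Str), (progShape m w).drop (m+1) = w := by
  intro m
  induction m with
  | zero => intro w; simp [progShape]
  | succ m ih => intro w; rw [progShape_succ]; simpa using ih w

private lemma shape_of_idxOf : ∀ (p : Str), List.idxOf false p < p.length →
    p = progShape (List.idxOf false p) (p.drop (List.idxOf false p + 1)) := by
  intro p
  induction p with
  | nil => simp
  | cons b t ih =>
      intro h
      cases b with
      | false => simp [progShape, List.idxOf_cons_self]
      | true =>
          rw [List.idxOf_cons_ne _ (by decide)] at h ⊢
          have h' : List.idxOf false t < t.length := by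
            simpa [Nat.succ_lt_succ_iff] using h
          have hih := ih h'
          show true :: t = progShape (List.idxOf false t + 1) _
          rw [progShape_succ]
          simpa using hih

private lemma progShape_prefix_eq :
    ∀ (a : ℕ) {b : ℕ} {u v : Str}, progShape a u <+: progShape b v → a = b := by
  intro a
  induction a with
  | zero =>
      intro b u v h
      cases b with
      | zero => rfl
      | succ b =>
          rw [progShape_succ] at h
          have : (false :: u) <+: (true :: progShape b v) := by simpa [progShape] using h
          exact absurd (List.cons_prefix_cons.mp this).1 (by decide)
  | succ a ih =>
      intro b u v h
      cases b with
      | zero =>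
          rw [progShape_succ] at h
          have : (true :: progShape a u) <+: (false :: v) := by simpa [progShape] using h
          exact absurd (List.cons_prefix_cons.mp this).1 (by decide)
      | succ b =>
          rw [progShape_succ, progShape_succ] at h
          exact congrArg Nat.succ (ih (List.cons_prefix_cons.mp h).2)


/-! #### computability helpers -/

private lemma computable_drop {α : Type} [Primcodable α] :
    Computable₂ (fun (n : ℕ) (l : List α) => l.drop n) := by
  have h : Computable fun (p : ℕ × List α) =>
      Nat.rec (motive := fun _ => List α) p.2 (fun _ ih => ih.tail) p.1 := by
    have := Computable.nat_rec (α := ℕ × List α) (σ := List α)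
      (f := Prod.fst) (g := Prod.snd)
      (h := fun _ q => q.2.tail)
      Computable.fst Computable.snd
      ((Primrec.list_tail.to_comp).comp (Computable.snd.comp Computable.snd)).to₂
    exact this
  refine h.of_eq ?_
  rintro ⟨n, l⟩
  induction n with
  | zero => simp
  | succ n ih => simpa [List.tail_drop] using congrArg List.tail ih

private lemma computable_valList {f : ℕ → ℕ} (hf : Computable f) :
    Computable (fun N => (List.range N).map f) := by
  have h : Computable fun (N : ℕ) =>
      Nat.rec (motive := fun _ => List ℕ) [] (fun y ih => ih ++ [f y]) N := by
    have := Computable.nat_rec (α := ℕ) (σ := List ℕ)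
      (f := id) (g := fun _ => ([] : List ℕ))
      (h := fun _ q => q.2 ++ [f q.1])
      Computable.id (Computable.const [])
      ((Primrec.list_concat.to_comp).comp
        (Computable.snd.comp Computable.snd)
        (hf.comp (Computable.fst.comp Computable.snd))).to₂
    exact this
  refine h.of_eq ?_
  intro N
  induction N with
  | zero => simp
  | succ N ih => simp [List.range_succ, ih]

private def allGe (c : ℕ) (l : List ℕ) : Bool :=
  l.foldr (fun v acc => acc && decide (c ≤ v)) true

private lemma allGe_iff (c : ℕ) (l : List ℕ) : allGe c l = true ↔ ∀ v ∈ l, c ≤ v := by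
  induction l with
  | nil => simp [allGe]
  | cons v l ih =>
      simp [allGe, Bool.and_eq_true] at ih ⊢
      rw [ih]; tauto

private lemma primrec_allGe : Primrec₂ allGe := by
  have := Primrec.list_foldr (α := ℕ × List ℕ) (β := ℕ) (σ := Bool)
    (f := Prod.snd) (g := fun _ => true)
    (h := fun a q => q.2 && decide (a.1 ≤ q.1))
    Primrec.snd (Primrec.const true)
    (((Primrec.dom_bool₂ (· && ·)).comp
        (Primrec.snd.comp Primrec.snd)
        ((Primrec.nat_le.comp (Primrec.fst.comp Primrec.fst) (Primrec.fst.comp Primrec.snd)).decide)).to₂)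
  exact this.to₂

private lemma primrec_pow2_s5 : Primrec (fun k => 2 ^ k) := by
  have h : Primrec fun (k : ℕ) =>
      Nat.rec (motive := fun _ => ℕ) 1 (fun _ ih => 2 * ih) k := by
    have := Primrec.nat_rec' (α := ℕ) (β := ℕ)
      (f := id) (g := fun _ => 1) (h := fun _ q => 2 * q.2)
      Primrec.id (Primrec.const 1)
      ((Primrec.nat_mul.comp (Primrec.const 2) (Primrec.snd.comp Primrec.snd)).to₂)
    exact this
  refine h.of_eq ?_
  intro k
  induction k with
  | zero => simp
  | succ k ih => rw [pow_succ]; simp [ih]; ring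

private def okFun (f : ℕ → ℕ) (m n : ℕ) : Bool :=
  decide (1 ≤ n) && allGe (2 ^ (3 * m)) (((List.range (n + 2 * m + 1)).map f).drop (n - 1))

private lemma mem_drop_range {d N j : ℕ} : j ∈ (List.range N).drop d ↔ d ≤ j ∧ j < N := by
  constructor
  · intro h
    obtain ⟨i, hi, hji⟩ := List.mem_iff_getElem.mp h
    rw [List.getElem_drop] at hji
    have hlen : i < N - d := by simpa using hi
    rw [List.getElem_range] at hji
    omega
  · rintro ⟨h1, h2⟩
    refine List.mem_iff_getElem.mpr ⟨j - d, ?_, ?_⟩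
    · simpa using by omega
    · rw [List.getElem_drop, List.getElem_range]; omega

private lemma okFun_iff (f : ℕ → ℕ) (m n : ℕ) : okFun f m n = true ↔
    (1 ≤ n ∧ ∀ j, n - 1 ≤ j → j ≤ n + 2 * m → 2 ^ (3 * m) ≤ f j) := by
  unfold okFun
  rw [Bool.and_eq_true, decide_eq_true_eq, allGe_iff]
  constructor
  · rintro ⟨h1, h2⟩
    refine ⟨h1, fun j hj1 hj2 => ?_⟩
    apply h2
    rw [← List.map_drop]
    exact List.mem_map_of_mem (mem_drop_range.mpr ⟨hj1, by omega⟩)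
  · rintro ⟨h1, h2⟩
    refine ⟨h1, fun v hv => ?_⟩
    rw [← List.map_drop] at hv
    obtain ⟨j, hj, rfl⟩ := List.mem_map.mp hv
    obtain ⟨hj1, hj2⟩ := mem_drop_range.mp hj
    exact h2 j hj1 (by omega)

private lemma computable_okFun {f : ℕ → ℕ} (hf : Computable f) : Computable₂ (okFun f) := by
  have h1 : Computable fun (p : ℕ × ℕ) => decide (1 ≤ p.2) :=
    (Primrec.nat_le.comp (Primrec.const 1) Primrec.snd).decide.to_comp
  have h2 : Computable fun (p : ℕ × ℕ) => 2 ^ (3 * p.1) :=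
    (primrec_pow2_s5.comp (Primrec.nat_mul.comp (Primrec.const 3) Primrec.fst)).to_comp
  have h3 : Computable fun (p : ℕ × ℕ) => ((List.range (p.2 + 2 * p.1 + 1)).map f).drop (p.2 - 1) := by
    apply computable_drop.comp
      ((Primrec.nat_sub.comp Primrec.snd (Primrec.const 1)).to_comp)
    exact (computable_valList hf).comp
      ((Primrec.nat_add.comp
          (Primrec.nat_add.comp Primrec.snd (Primrec.nat_mul.comp (Primrec.const 2) Primrec.fst))
          (Primrec.const 1)).to_comp)
  exact (((Primrec.dom_bool₂ (· && ·)).to_comp).comp h1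
    ((primrec_allGe.to_comp).comp h2 h3)).to₂

/-! #### the computer -/

private def compFun (a : ℕ → Str) (nn : ℕ → ℕ) (p : Str) : Option Str :=
  if p.length = List.idxOf false p + 1 + nn (List.idxOf false p) then
    some (a (strVal (p.drop (List.idxOf false p + 1))))
  else none

private lemma compFun_progShape (a : ℕ → Str) (nn : ℕ → ℕ) (m : ℕ) (w : Str)
    (hw : w.length = nn m) : compFun a nn (progShape m w) = some (a (strVal w)) := by
  unfold compFun
  rw [progShape_idxOf, progShape_drop, if_pos (by rw [progShape_length, hw])]

private lemma compFun_eq_some {a : ℕ → Str} {nn : ℕ → ℕ} {p : Str} {s : Str}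
    (h : compFun a nn p = some s) : ∃ m w, p = progShape m w ∧ w.length = nn m := by
  unfold compFun at h
  split_ifs at h with hc
  refine ⟨List.idxOf false p, p.drop (List.idxOf false p + 1),
    shape_of_idxOf p (by omega), ?_⟩
  rw [List.length_drop]; omega

private lemma computable_compFun {a : ℕ → Str} {nn : ℕ → ℕ}
    (ha : Computable a) (hnn : Computable nn) : Computable (compFun a nn) := by
  have hidx : Primrec fun (p : Str) => List.idxOf false p :=
    Primrec.list_idxOf.comp (Primrec.const false) Primrec.id
  have hstrVal : Primrec strVal := by
    have := Primrec.list_foldr (α := Str) (β := Bool) (σ := ℕ)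
      (f := id) (g := fun _ => 0)
      (h := fun _ q => 2 * q.2 + cond q.1 1 0)
      Primrec.id (Primrec.const 0)
      ((Primrec.nat_add.comp
          (Primrec.nat_mul.comp (Primrec.const 2) (Primrec.snd.comp Primrec.snd))
          (Primrec.cond (Primrec.fst.comp Primrec.snd) (Primrec.const 1) (Primrec.const 0))).to₂)
    exact this.of_eq (fun w => rfl)
  have hrhs : Computable fun (p : Str) =>
      List.idxOf false p + 1 + nn (List.idxOf false p) :=
    (Primrec.nat_add.to_comp).comp
      ((Primrec.nat_add.comp hidx (Primrec.const 1)).to_comp)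
      (hnn.comp hidx.to_comp)
  have hcondc : Computable fun (p : Str) =>
      decide (p.length = List.idxOf false p + 1 + nn (List.idxOf false p)) :=
    ((Primrec.eq (α := ℕ)).decide.to_comp).comp (Primrec.list_length.to_comp) hrhs
  have hval : Computable fun (p : Str) => a (strVal (p.drop (List.idxOf false p + 1))) :=
    ha.comp ((hstrVal.to_comp).comp
      (computable_drop.comp ((Primrec.nat_add.comp hidx (Primrec.const 1)).to_comp) Computable.id))
  have hcond : Computable fun (p : Str) =>
      bif decide (p.length = List.idxOf false p + 1 + nn (List.idxOf false p)) then
        some (a (strVal (p.drop (List.idxOf false p + 1)))) else none :=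
    Computable.cond hcondc (Computable.option_some.comp hval) (Computable.const none)
  refine hcond.of_eq fun p => ?_
  simp only [Bool.cond_decide]
  rfl



private def mkComputer (a : ℕ → Str) (nn : ℕ → ℕ)
    (ha : Computable a) (hnn : Computable nn) : Computer where
  f := fun p => (compFun a nn p : Part Str)
  partrec := Computable.ofOption (computable_compFun ha hnn)
  prefixFree := by
    intro p q hp hq hpq
    obtain ⟨sp, hsp⟩ := Part.dom_iff_mem.mp hp
    obtain ⟨sq, hsq⟩ := Part.dom_iff_mem.mp hq
    rw [Part.mem_ofOption] at hsp hsq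
    obtain ⟨mp, wp, hp1, hp2⟩ := compFun_eq_some hsp
    obtain ⟨mq, wq, hq1, hq2⟩ := compFun_eq_some hsq
    rw [hp1, hq1] at hpq ⊢
    have hm : mp = mq := progShape_prefix_eq mp hpq
    apply hpq.eq_of_length
    rw [progShape_length, progShape_length, hp2, hq2, hm]

private lemma mkComputer_f (a : ℕ → Str) (nn : ℕ → ℕ) (ha : Computable a)
    (hnn : Computable nn) (m i : ℕ) (hi : i < 2 ^ nn m) :
    a i ∈ (mkComputer a nn ha hnn).f (progShape m (strEnc (nn m) i)) := by
  show a i ∈ (compFun a nn (progShape m (strEnc (nn m) i)) : Part Str)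
  rw [compFun_progShape a nn m _ (strEnc_length _ _), strVal_strEnc, Nat.mod_eq_of_lt hi]
  simp [Part.mem_ofOption]

/-! #### injective computable enumeration of an infinite r.e. set -/

set_option maxHeartbeats 1000000 in
private lemma exists_inj_enum {A : Set Str} (hA : A.Infinite) (hre : REset A) :
    ∃ a : ℕ → Str, Computable a ∧ Function.Injective a ∧ ∀ n, a n ∈ A := by
  classical
  obtain ⟨g, hg, hgA⟩ := hre
  obtain ⟨c, hc⟩ := Code.exists_code.1 hg
  set E : ℕ → Option Str := fun t =>
    (evaln t.unpair.1 c t.unpair.2).bind fun _ => (Encodable.decode (α := Str) t.unpair.2)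
    with hE
  have hEc : Computable E := by
    have h1 : Computable fun t : ℕ => evaln t.unpair.1 c t.unpair.2 :=
      (primrec_evaln.to_comp).comp
        (((Computable.fst.comp Computable.unpair).pair (Computable.const c)).pair
          (Computable.snd.comp Computable.unpair))
    exact Computable.option_bind h1
      ((Computable.decode.comp (Computable.snd.comp (Computable.unpair.comp Computable.fst))).to₂)
  have hEA : ∀ {t s}, E t = some s → s ∈ A := by
    intro t s h
    simp only [hE, Option.bind_eq_some_iff] at h
    obtain ⟨v, hv, hdec⟩ := h
    have hv' : v ∈ c.eval t.unpair.2 := evaln_sound hv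
    have hdom : (c.eval t.unpair.2).Dom := Part.dom_iff_mem.mpr ⟨v, hv'⟩
    rw [hc] at hdom
    simp only [] at hdom
    rw [hdec] at hdom
    simp at hdom
    exact (hgA s).1 hdom
  have hAE : ∀ s ∈ A, ∃ t, E t = some s := by
    intro s hs
    have hdom : (g s).Dom := (hgA s).2 hs
    have h1 : (c.eval (Encodable.encode s)).Dom := by
      rw [hc]
      simp only []
      rw [Encodable.encodek]
      simp [hdom]
    obtain ⟨v, hv⟩ := Part.dom_iff_mem.mp h1
    obtain ⟨k, hk⟩ := evaln_complete.1 hv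
    refine ⟨Nat.pair k (Encodable.encode s), ?_⟩
    simp only [hE, Nat.unpair_pair]
    rw [Option.mem_def.mp hk]
    simp [Encodable.encodek]
  set Ef : List Str → ℕ → Option Str := fun l t =>
    (E t).bind fun s => if s ∈ l then none else some s with hEf
  have hEfc : Computable₂ Ef := by
    have hmem : Computable fun (q : (List Str × ℕ) × Str) => decide (q.2 ∈ q.1.1) := by
      have h1 : Primrec fun (q : (List Str × ℕ) × Str) =>
          decide (@List.idxOf Str instBEqOfDecidableEq q.2 q.1.1 < q.1.1.length) :=
        (Primrec.nat_lt.comp (Primrec.list_idxOf.comp Primrec.snd (Primrec.fst.comp Primrec.fst))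
          (Primrec.list_length.comp (Primrec.fst.comp Primrec.fst))).decide
      exact (h1.of_eq (fun q => by
        by_cases h : q.2 ∈ q.1.1 <;> simp [h, List.idxOf_lt_length_iff])).to_comp
    have hg2 : Computable₂ fun (p : List Str × ℕ) (s : Str) =>
        if s ∈ p.1 then (none : Option Str) else some s := by
      have hg2' : Computable fun (q : (List Str × ℕ) × Str) =>
          if q.2 ∈ q.1.1 then (none : Option Str) else some q.2 := by
        refine (Computable.cond (α := (List Str × ℕ) × Str) (σ := Option Str)
          hmem (Computable.const none) (Computable.option_some.comp Computable.snd)).of_eq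
          fun q => ?_
        simp [Bool.cond_decide]
      exact hg2'.to₂
    exact Computable.option_bind (hEc.comp Computable.snd) hg2
  have hdomf : ∀ l, (Nat.rfindOpt (Ef l)).Dom := by
    intro l
    obtain ⟨s, hsA, hsl⟩ := hA.exists_notMem_finset l.toFinset
    rw [List.mem_toFinset] at hsl
    obtain ⟨t, ht⟩ := hAE s hsA
    refine Nat.rfindOpt_dom.2 ⟨t, s, ?_⟩
    simp [hEf, ht, hsl]
  set fresh : List Str → Str := fun l => (Nat.rfindOpt (Ef l)).get (hdomf l) with hfr
  have hfc : Computable fresh :=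
    Partrec.of_eq_tot (Partrec.rfindOpt hEfc) (fun l => Part.get_mem _)
  have hfP : ∀ l, fresh l ∈ A ∧ fresh l ∉ l := by
    intro l
    obtain ⟨t, ht⟩ := Nat.rfindOpt_spec (Part.get_mem (hdomf l))
    rw [Option.mem_def] at ht
    simp only [hEf, Option.bind_eq_some_iff] at ht
    obtain ⟨s, hEt, hcond⟩ := ht
    by_cases hsl : s ∈ l
    · simp [hsl] at hcond
    · simp [hsl] at hcond
      subst hcond
      exact ⟨hEA hEt, hsl⟩
  set seq : ℕ → List Str := fun n =>
    Nat.rec (motive := fun _ => List Str) [] (fun _ ih => fresh ih :: ih) n with hseq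
  have hseqc : Computable seq := by
    have := Computable.nat_rec (α := ℕ) (σ := List Str)
      (f := id) (g := fun _ => ([] : List Str))
      (h := fun _ q => fresh q.2 :: q.2)
      Computable.id (Computable.const [])
      ((Primrec.list_cons.to_comp).comp
        (hfc.comp (Computable.snd.comp Computable.snd))
        (Computable.snd.comp Computable.snd)).to₂
    exact this
  have hmemseq : ∀ k n, k < n → fresh (seq k) ∈ seq n := by
    intro k n hkn
    induction n with
    | zero => omega
    | succ n ih =>
        have hs : seq (n+1) = fresh (seq n) :: seq n := rfl
        rcases Nat.lt_succ_iff_lt_or_eq.mp hkn with h | h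
        · rw [hs]; exact List.mem_cons_of_mem _ (ih h)
        · subst h; rw [hs]; exact List.mem_cons_self
  refine ⟨fun n => fresh (seq n), hfc.comp hseqc, ?_, fun n => (hfP _).1⟩
  intro i j h
  have h' : fresh (seq i) = fresh (seq j) := h
  by_contra hne
  rcases Ne.lt_or_gt hne with hlt | hlt
  · exact (hfP (seq j)).2 (h' ▸ hmemseq i j hlt)
  · exact (hfP (seq i)).2 (h' ▸ hmemseq j i hlt)


private lemma nn_spec_and_computable {f : ℕ → ℕ} (hf : Computable f)
    (hlim : Tendsto f atTop atTop) :
    ∃ nn : ℕ → ℕ, Computable nn ∧ ∀ m, 1 ≤ nn m ∧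
      ∀ j, nn m - 1 ≤ j → j ≤ nn m + 2 * m → 2 ^ (3 * m) ≤ f j := by
  have exOK : ∀ m, ∃ n, okFun f m n = true := by
    intro m
    obtain ⟨N, hN⟩ := Filter.eventually_atTop.1 (hlim.eventually_ge_atTop (2 ^ (3 * m)))
    exact ⟨N + 1, (okFun_iff f m (N+1)).mpr ⟨by omega, fun j h1 _ => hN j (by omega)⟩⟩
  refine ⟨fun m => Nat.find (exOK m), ?_, fun m => ?_⟩
  · have hok : Computable₂ (okFun f) := computable_okFun hf
    have hp : Partrec₂ fun (m n : ℕ) => (Part.some (okFun f m n) : Part Bool) := hok.partrec₂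
    refine (Partrec.rfind hp).of_eq_tot fun m => ?_
    obtain ⟨n, hn, hle⟩ := Nat.rfind_min' (p := fun n => okFun f m n) (Nat.find_spec (exOK m))
    have h1 : okFun f m n = true := by
      have := Nat.rfind_spec hn
      simpa using this
    have h2 : Nat.find (exOK m) ≤ n := Nat.find_min' (exOK m) h1
    have he : n = Nat.find (exOK m) := le_antisymm hle h2
    exact he ▸ hn
  · have h := (okFun_iff f m _).1 (Nat.find_spec (exOK m))
    exact ⟨h.1, h.2⟩

private lemma strKey_inj (p q : Str)
    (h : strVal p + (2 ^ p.length - 1) = strVal q + (2 ^ q.length - 1)) : p = q := by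
  have hb : ∀ r : Str, strVal r + (2 ^ r.length - 1) < 2 ^ (r.length + 1) - 1 := by
    intro r
    have h1 := strVal_lt r
    have h2 : (1:ℕ) ≤ 2 ^ r.length := Nat.one_le_two_pow
    have h3 : 2 ^ (r.length + 1) = 2 * 2 ^ r.length := by rw [pow_succ]; ring
    omega
  rcases lt_trichotomy p.length q.length with hl | hl | hl
  · exfalso
    have h1 := hb p
    have h2 : 2 ^ (p.length + 1) ≤ 2 ^ q.length := Nat.pow_le_pow_right (by norm_num) (by omega)
    have h3 := strVal_lt q
    have h4 : (1:ℕ) ≤ 2 ^ q.length := Nat.one_le_two_pow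
    omega
  · apply strVal_injOn p q hl
    have h2 : (2:ℕ) ^ p.length = 2 ^ q.length := by rw [hl]
    omega
  · exfalso
    have h1 := hb q
    have h2 : 2 ^ (q.length + 1) ≤ 2 ^ p.length := Nat.pow_le_pow_right (by norm_num) (by omega)
    have h3 := strVal_lt p
    have h4 : (1:ℕ) ≤ 2 ^ p.length := Nat.one_le_two_pow
    omega

end DivergenceAux

set_option maxHeartbeats 1000000 in
/-- For an infinite r.e. set `A` and total recursive `f` with `f n → ∞`,
the sum `∑_{p : U p ∈ A} f (|p|) 2^(-|p|)` diverges to infinity. -/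
theorem sum_over_programs_diverges (U : OptimalComputer) (A : Set Str)
    (hA : A.Infinite) (hre : REset A)
    (f : ℕ → ℕ) (hf : Computable f) (hlim : Tendsto f atTop atTop) :
    ∀ B : ℝ, ∃ F : Finset Str,
      B ≤ ∑ p ∈ F, Set.indicator {p : Str | ∃ s ∈ A, s ∈ U.f p}
        (fun p => (f p.length : ℝ) * 2 ^ (-(p.length : ℤ))) p := by
  classical
  obtain ⟨a, hac, hainj, haA⟩ := exists_inj_enum hA hre
  obtain ⟨nn, hnnc, hnnP⟩ := nn_spec_and_computable hf hlim
  obtain ⟨sim, hsim⟩ := U.optimal (mkComputer a nn hac hnnc)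
  intro B
  obtain ⟨n0, hn0⟩ := pow_unbounded_of_one_lt B (one_lt_two (α := ℝ))
  set m := max (sim + 1) (n0 + 1) with hm
  set N := nn m with hNdef
  have hN1 : 1 ≤ N := (hnnP m).1
  have hwin : ∀ j, N - 1 ≤ j → j ≤ N + 2 * m → 2 ^ (3 * m) ≤ f j := (hnnP m).2
  have hprog : ∀ i, i < 2 ^ N → ∃ p', a i ∈ U.toComputer.f p' ∧
      p'.length ≤ m + 1 + N + sim := by
    intro i hi
    obtain ⟨p', hq1, hq2⟩ := hsim _ _ (mkComputer_f a nn hac hnnc m i hi)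
    rw [progShape_length, strEnc_length] at hq2
    exact ⟨p', hq1, by omega⟩
  set pfun : ℕ → Str := fun i => if h : i < 2 ^ N then (hprog i h).choose else [] with hpfun
  have hp1 : ∀ i, i < 2 ^ N → a i ∈ U.toComputer.f (pfun i) := by
    intro i h
    simp only [hpfun, dif_pos h]
    exact (hprog i h).choose_spec.1
  have hp2 : ∀ i, i < 2 ^ N → (pfun i).length ≤ m + 1 + N + sim := by
    intro i h
    simp only [hpfun, dif_pos h]
    exact (hprog i h).choose_spec.2
  have hpinj : ∀ i, i < 2 ^ N → ∀ j, j < 2 ^ N → pfun i = pfun j → i = j := by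
    intro i hi j hj he
    exact hainj (Part.mem_unique (hp1 i hi) (he ▸ hp1 j hj))
  set kept := (Finset.range (2 ^ N)).filter (fun i => N - 1 ≤ (pfun i).length) with hkept
  have hbadcard : ((Finset.range (2 ^ N)).filter
      (fun i => ¬ (N - 1 ≤ (pfun i).length))).card ≤ 2 ^ (N - 1) - 1 := by
    have hcard := Finset.card_le_card_of_injOn
      (s := (Finset.range (2 ^ N)).filter (fun i => ¬ (N - 1 ≤ (pfun i).length)))
      (t := Finset.range (2 ^ (N - 1) - 1))
      (fun i => strVal (pfun i) + (2 ^ (pfun i).length - 1)) ?_ ?_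
    · simpa using hcard
    · intro i hi
      rw [Finset.mem_coe, Finset.mem_filter, Finset.mem_range] at hi
      obtain ⟨hi1, hi2⟩ := hi
      rw [Finset.mem_coe, Finset.mem_range]
      show strVal (pfun i) + (2 ^ (pfun i).length - 1) < 2 ^ (N - 1) - 1
      have h1 := strVal_lt (pfun i)
      have h2 : 2 ^ ((pfun i).length + 1) ≤ 2 ^ (N - 1) :=
        Nat.pow_le_pow_right (by norm_num) (by omega)
      have h3 : (2:ℕ) ^ ((pfun i).length + 1) = 2 * 2 ^ (pfun i).length := by
        rw [pow_succ]; ring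
      have h4 : (1:ℕ) ≤ 2 ^ (pfun i).length := Nat.one_le_two_pow
      omega
    · intro i hi j hj he
      simp only [Finset.coe_filter, Set.mem_setOf_eq, Finset.mem_range] at hi hj
      exact hpinj i hi.1 j hj.1 (strKey_inj _ _ he)
  have hkeptcard : 2 ^ (N - 1) ≤ kept.card := by
    have hsub : Finset.range (2 ^ N) ⊆ kept ∪ ((Finset.range (2 ^ N)).filter
        (fun i => ¬ (N - 1 ≤ (pfun i).length))) := by
      intro i hi
      rw [Finset.mem_union, hkept, Finset.mem_filter, Finset.mem_filter]
      by_cases h : N - 1 ≤ (pfun i).length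
      · exact Or.inl ⟨hi, h⟩
      · exact Or.inr ⟨hi, h⟩
    have hle := (Finset.card_le_card hsub).trans (Finset.card_union_le _ _)
    rw [Finset.card_range] at hle
    have hpow : (2:ℕ) ^ N = 2 * 2 ^ (N - 1) := by
      rw [← pow_succ']
      congr 1
      omega
    have h4 : (1:ℕ) ≤ 2 ^ (N - 1) := Nat.one_le_two_pow
    omega
  refine ⟨kept.image pfun, ?_⟩
  rw [Finset.sum_image (fun i hi j hj he =>
    hpinj i (Finset.mem_range.mp (Finset.mem_of_mem_filter i hi)) j
      (Finset.mem_range.mp (Finset.mem_of_mem_filter j hj)) he)]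
  have hterm : ∀ i ∈ kept, (2:ℝ) ^ ((m:ℤ) - N) ≤
      Set.indicator {p : Str | ∃ s ∈ A, s ∈ U.f p}
        (fun p => (f p.length : ℝ) * 2 ^ (-(p.length : ℤ))) (pfun i) := by
    intro i hi
    rw [hkept, Finset.mem_filter, Finset.mem_range] at hi
    obtain ⟨hi1, hi2⟩ := hi
    have hsim1 : sim + 1 ≤ m := le_max_left _ _
    have hlenub : (pfun i).length ≤ N + 2 * m := by
      have := hp2 i hi1
      omega
    have hfval : 2 ^ (3 * m) ≤ f (pfun i).length := hwin _ hi2 hlenub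
    have hmem : pfun i ∈ {p : Str | ∃ s ∈ A, s ∈ U.f p} := ⟨a i, haA i, hp1 i hi1⟩
    rw [Set.indicator_of_mem hmem]
    have e1 : (2:ℝ) ^ ((m:ℤ) - N) =
        (2:ℝ) ^ ((3 * m : ℕ) : ℤ) * (2:ℝ) ^ (-((N + 2 * m : ℕ) : ℤ)) := by
      rw [← zpow_add₀ (two_ne_zero)]
      congr 1
      push_cast
      ring
    rw [e1]
    have f1 : ((2:ℝ) ^ ((3 * m : ℕ) : ℤ)) ≤ (f (pfun i).length : ℝ) := by
      rw [zpow_natCast]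
      calc ((2:ℝ)) ^ (3 * m) = ((2 ^ (3 * m) : ℕ) : ℝ) := by push_cast; ring
      _ ≤ _ := Nat.cast_le.mpr hfval
    have f2 : (2:ℝ) ^ (-((N + 2 * m : ℕ) : ℤ)) ≤ (2:ℝ) ^ (-((pfun i).length : ℤ)) :=
      zpow_le_zpow_right₀ one_le_two (neg_le_neg (by exact_mod_cast hlenub))
    exact mul_le_mul f1 f2 (by positivity) (by positivity)
  have hsum := Finset.card_nsmul_le_sum kept _ _ hterm
  rw [nsmul_eq_mul] at hsum
  have hc1 : ((2:ℝ) ^ (N - 1 : ℕ)) * (2:ℝ) ^ ((m:ℤ) - N) ≤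
      (kept.card : ℝ) * (2:ℝ) ^ ((m:ℤ) - N) := by
    apply mul_le_mul_of_nonneg_right _ (by positivity)
    calc ((2:ℝ) ^ (N - 1 : ℕ)) = ((2 ^ (N - 1) : ℕ) : ℝ) := by push_cast; ring
    _ ≤ (kept.card : ℝ) := Nat.cast_le.mpr hkeptcard
  have hc2 : ((2:ℝ) ^ (N - 1 : ℕ)) * (2:ℝ) ^ ((m:ℤ) - N) = (2:ℝ) ^ ((m:ℤ) - 1) := by
    rw [← zpow_natCast (2:ℝ) (N - 1), ← zpow_add₀ (two_ne_zero)]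
    congr 1
    rw [Nat.cast_sub hN1]
    ring
  have hc3 : B < (2:ℝ) ^ ((m:ℤ) - 1) := by
    have hm1 : n0 + 1 ≤ m := le_max_right _ _
    calc B < 2 ^ n0 := hn0
    _ = (2:ℝ) ^ ((n0 : ℕ) : ℤ) := (zpow_natCast _ _).symm
    _ ≤ (2:ℝ) ^ ((m:ℤ) - 1) := zpow_le_zpow_right₀ one_le_two (by
        have : (n0:ℤ) + 1 ≤ (m:ℤ) := by exact_mod_cast hm1
        omega)
  rw [← hc2] at hc3
  linarith


end Paper
end

section
/- The sum ∑_{s∈{0,1}*} K(s) 2^{-K(s)} diverges to infinity, where K is the prefix-free Kolmogorov complexity. -/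
open Filter Topology

namespace Paper

/-! ### Auxiliary machinery for the divergence proof -/

def natOfBits (l : Str) : ℕ := l.foldr (fun b a => 2 * a + cond b 1 0) 0

def decodeP (p : Str) : Option Str :=
  let k := p.idxOf false
  let n := natOfBits ((p.drop (k+1)).take k)
  if p.length = 2*k + 1 + n then some ((p.drop (k+1)).drop k) else none

lemma natOfBits_surj : ∀ (L n : ℕ), n < 2^L → ∃ bl : Str, bl.length = L ∧ natOfBits bl = n := by
  intro L
  induction L with
  | zero => intro n hn; interval_cases n; exact ⟨[], rfl, rfl⟩
  | succ L ih =>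
    intro n hn
    obtain ⟨bl, h1, h2⟩ := ih (n / 2) (Nat.div_lt_of_lt_mul (by rw [pow_succ] at hn; omega))
    refine ⟨(n % 2 = 1) :: bl, by simp [h1], ?_⟩
    simp only [natOfBits, List.foldr_cons] at h2 ⊢
    rw [h2]
    rcases Nat.mod_two_eq_zero_or_one n with h | h <;> simp [h] <;> omega

lemma indexOf_false_encode (L : ℕ) (r : Str) :
    (List.replicate L true ++ false :: r).idxOf false = L := by
  induction L with
  | zero => simp
  | succ L ih => simpa [List.replicate_succ, List.idxOf_cons_ne] using ih

lemma decodeP_encode (s bl : Str) (h : natOfBits bl = s.length) :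
    decodeP (List.replicate bl.length true ++ false :: (bl ++ s)) = some s := by
  set L := bl.length
  have hk : (List.replicate L true ++ false :: (bl ++ s)).idxOf false = L :=
    indexOf_false_encode L (bl ++ s)
  have hdrop : (List.replicate L true ++ false :: (bl ++ s)).drop (L+1) = bl ++ s := by
    rw [List.drop_append]
    simp [L]
  have hlen : (List.replicate L true ++ false :: (bl ++ s)).length = 2*L + 1 + s.length := by
    simp [L]; omega
  simp only [decodeP, hk, hdrop, hlen]
  rw [List.take_append, List.drop_append]
  simp [L, h]

lemma decodeP_prefixFree (p q : Str) (hp : (decodeP p).isSome) (hq : (decodeP q).isSome)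
    (hpq : p <+: q) : p = q := by
  obtain ⟨r, rfl⟩ := hpq
  unfold decodeP at hp hq
  set k := p.idxOf false with hk
  simp only at hp
  split at hp
  case isFalse => simp at hp
  case isTrue hlen =>
    have hkl : k < p.length := by omega
    have hmem : false ∈ p := by
      by_contra hmem
      rw [hk, List.idxOf_eq_length_iff.mpr hmem] at hkl; omega
    have hkq : (p ++ r).idxOf false = k := List.idxOf_append_of_mem hmem
    have hdrop : (p ++ r).drop (k+1) = p.drop (k+1) ++ r := by
      rw [List.drop_append]
      have : k + 1 - p.length = 0 := by omega
      rw [this, List.drop_zero]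
    have hlen2 : k ≤ (p.drop (k+1)).length := by
      rw [List.length_drop]; omega
    have htake : ((p ++ r).drop (k+1)).take k = (p.drop (k+1)).take k := by
      rw [hdrop, List.take_append]
      have : k - (p.drop (k+1)).length = 0 := by omega
      rw [this, List.take_zero, List.append_nil]
    simp only [hkq, htake] at hq
    split at hq
    case isFalse => simp at hq
    case isTrue hlen' =>
      rw [List.length_append] at hlen'
      have : r.length = 0 := by omega
      simp [List.length_eq_zero_iff.mp this]

lemma primrec_drop : Primrec₂ (fun (l : Str) (n : ℕ) => l.drop n) := by
  have h : Primrec fun a : Str × ℕ => (fun l : Str => l.tail)^[a.2] a.1 :=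
    Primrec.nat_iterate Primrec.snd Primrec.fst ((Primrec.list_tail).comp Primrec.snd).to₂
  refine h.to₂.of_eq fun l n => ?_
  induction n generalizing l with
  | zero => simp
  | succ n ih =>
    rw [Function.iterate_succ_apply, ih, ← List.drop_one, List.drop_drop, Nat.add_comm]

lemma primrec_take : Primrec₂ (fun (l : Str) (n : ℕ) => l.take n) := by
  have h : Primrec fun a : Str × ℕ => ((a.1.reverse.drop (a.1.length - a.2)).reverse) :=
    Primrec.list_reverse.comp <| primrec_drop.comp
      (Primrec.list_reverse.comp Primrec.fst)
      (Primrec.nat_sub.comp (Primrec.list_length.comp Primrec.fst) Primrec.snd)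
  refine h.to₂.of_eq fun l n => ?_
  rw [← List.reverse_take, List.reverse_reverse]

lemma primrec_natOfBits : Primrec natOfBits := by
  unfold natOfBits
  exact Primrec.list_foldr Primrec.id (Primrec.const 0)
    ((Primrec.nat_add.comp
      (Primrec.nat_mul.comp (Primrec.const 2) (Primrec.snd.comp Primrec.snd))
      (Primrec.cond (Primrec.fst.comp Primrec.snd) (Primrec.const 1) (Primrec.const 0))).to₂)

lemma computable_decodeP : Computable decodeP := by
  have hk : Primrec fun p : Str => p.idxOf false :=
    Primrec.list_idxOf.comp (Primrec.const false) Primrec.id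
  have hd : Primrec fun p : Str => p.drop (p.idxOf false + 1) :=
    primrec_drop.comp Primrec.id (Primrec.succ.comp hk)
  have hn : Primrec fun p : Str => natOfBits ((p.drop (p.idxOf false + 1)).take (p.idxOf false)) :=
    primrec_natOfBits.comp (primrec_take.comp hd hk)
  have hcond : PrimrecPred fun p : Str =>
      p.length = 2 * p.idxOf false + 1 + natOfBits ((p.drop (p.idxOf false + 1)).take (p.idxOf false)) :=
    Primrec.eq.comp Primrec.list_length
      (Primrec.nat_add.comp
        (Primrec.nat_add.comp (Primrec.nat_mul.comp (Primrec.const 2) hk) (Primrec.const 1)) hn)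
  have hout : Primrec fun p : Str => some ((p.drop (p.idxOf false + 1)).drop (p.idxOf false)) :=
    Primrec.option_some.comp (primrec_drop.comp hd hk)
  exact (Primrec.ite hcond hout (Primrec.const none)).to_comp

/-- The computer that decodes the self-delimiting encoding. -/
def Cmach : Computer where
  f := fun p => Part.ofOption (decodeP p)
  partrec := computable_decodeP.ofOption
  prefixFree := fun p q hp hq hpq =>
    decodeP_prefixFree p q (by simpa [Part.ofOption_dom] using hp)
      (by simpa [Part.ofOption_dom] using hq) hpq

/-- The finset of all binary strings of length `n`. -/
def allStr (n : ℕ) : Finset Str :=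
  (Finset.univ : Finset (Fin n → Bool)).image List.ofFn

lemma mem_allStr {n : ℕ} {s : Str} : s ∈ allStr n ↔ s.length = n := by
  constructor
  · rintro hs
    simp only [allStr, Finset.mem_image] at hs
    obtain ⟨v, -, rfl⟩ := hs
    simp
  · intro hs
    subst hs
    simp only [allStr, Finset.mem_image]
    exact ⟨fun i => s.get (i.cast rfl), Finset.mem_univ _, by simp [List.ofFn_get]⟩

lemma card_allStr (n : ℕ) : (allStr n).card = 2 ^ n := by
  rw [allStr, Finset.card_image_of_injective _ List.ofFn_injective]
  simp [Finset.card_univ]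

lemma sum_range_two_pow (k : ℕ) : ∑ i ∈ Finset.range k, 2 ^ i = 2 ^ k - 1 := by
  induction k with
  | zero => simp
  | succ k ih =>
    rw [Finset.sum_range_succ, ih, pow_succ]
    have : 1 ≤ 2 ^ k := Nat.one_le_two_pow
    omega

lemma two_pow_size_le (n : ℕ) (hn : 1 ≤ n) : 2 ^ Nat.size n ≤ 2 * n := by
  have h1 : 1 ≤ Nat.size n := by
    rw [Nat.succ_le_iff, Nat.size_pos]; omega
  have h2 : 2 ^ (Nat.size n - 1) ≤ n := by
    rw [← Nat.lt_size]; omega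
  calc 2 ^ Nat.size n = 2 * 2 ^ (Nat.size n - 1) := by
        rw [← pow_succ']; congr 1; omega
    _ ≤ 2 * n := by omega

/-- The sum `∑ s, K s * 2^(-K s)` diverges to infinity. -/
theorem sum_K_two_pow_neg_K_diverges (U : OptimalComputer) :
    ∀ B : ℝ, ∃ F : Finset Str,
      B ≤ ∑ s ∈ F, (Kc U s : ℝ) * 2 ^ (-(Kc U s : ℤ)) := by
  intro B
  classical
  obtain ⟨c, hc⟩ := U.optimal Cmach
  set term : Str → ℝ := fun s => (Kc U s : ℝ) * 2 ^ (-(Kc U s : ℤ)) with hterm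
  have hterm_nonneg : ∀ s, 0 ≤ term s := fun s =>
    mul_nonneg (Nat.cast_nonneg _) (zpow_nonneg (by norm_num) _)
  -- every string has a program of controlled length
  have hprog : ∀ s : Str, ∃ p' : Str, s ∈ U.toComputer.f p' ∧
      p'.length ≤ s.length + 2 * Nat.size s.length + 1 + c := by
    intro s
    obtain ⟨bl, hbl, hnb⟩ := natOfBits_surj (Nat.size s.length) s.length (Nat.lt_size_self _)
    have henc := decodeP_encode s bl hnb
    have hmem : s ∈ Cmach.f (List.replicate bl.length true ++ false :: (bl ++ s)) := by
      simp only [Cmach, henc, Part.mem_ofOption]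
      rfl
    obtain ⟨p', hp', hlen⟩ := hc _ s hmem
    refine ⟨p', hp', ?_⟩
    have hl : (List.replicate bl.length true ++ false :: (bl ++ s)).length
        = 2 * bl.length + 1 + s.length := by simp; omega
    omega
  have hne : ∀ s : Str, {m | ∃ p : Str, p.length = m ∧ s ∈ U.toComputer.f p}.Nonempty :=
    fun s => (hprog s).elim fun p' hp' => ⟨p'.length, p', rfl, hp'.1⟩
  have hKle : ∀ s : Str, Kc U s ≤ s.length + 2 * Nat.size s.length + 1 + c := by
    intro s
    obtain ⟨p', hp', hlen⟩ := hprog s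
    exact le_trans (Nat.sInf_le ⟨p', rfl, hp'⟩) hlen
  have hshort : ∀ s : Str, ∃ p : Str, p.length = Kc U s ∧ s ∈ U.toComputer.f p :=
    fun s => Nat.sInf_mem (hne s)
  choose prog hproglen hprogmem using hshort
  -- counting: few strings have small complexity
  have hcount : ∀ n m : ℕ, ((allStr n).filter (fun s => Kc U s ≤ m)).card ≤ 2 ^ (m+1) - 1 := by
    intro n m
    have h1 : ((allStr n).filter (fun s => Kc U s ≤ m)).card
        ≤ ((Finset.range (m+1)).biUnion allStr).card := by
      apply Finset.card_le_card_of_injOn prog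
      · intro s hs
        simp only [Finset.mem_coe, Finset.mem_filter] at hs
        simp only [Finset.mem_coe, Finset.mem_biUnion]
        exact ⟨(prog s).length, by
          rw [Finset.mem_range, hproglen]; omega, mem_allStr.mpr rfl⟩
      · intro s _ t _ h
        exact Part.mem_unique (hprogmem s) (h ▸ hprogmem t)
    calc ((allStr n).filter (fun s => Kc U s ≤ m)).card
        ≤ ((Finset.range (m+1)).biUnion allStr).card := h1
      _ ≤ ∑ i ∈ Finset.range (m+1), (allStr i).card := Finset.card_biUnion_le
      _ = 2 ^ (m+1) - 1 := by
          simp only [card_allStr]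
          exact sum_range_two_pow (m+1)
  -- many strings of length n have complexity ≥ n - 1
  have hT : ∀ n : ℕ, 2 ≤ n →
      2 ^ (n-1) ≤ ((allStr n).filter (fun s => ¬ Kc U s ≤ n - 2)).card := by
    intro n hn
    have hsplit := Finset.card_filter_add_card_filter_not
      (s := allStr n) (p := fun s => Kc U s ≤ n - 2)
    have h1 := hcount n (n-2)
    have e1 : n - 2 + 1 = n - 1 := by omega
    rw [e1] at h1
    have e2 : 2 ^ n = 2 ^ (n-1) * 2 := by rw [← pow_succ]; congr 1; omega
    have e3 := card_allStr n
    have e4 : 1 ≤ 2 ^ (n-1) := Nat.one_le_two_pow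
    omega
  -- per-length lower bound on the sum
  have hlen_sum : ∀ n : ℕ, 2 ≤ n →
      ((2:ℝ) ^ (c+5) * n)⁻¹ ≤ ∑ s ∈ allStr n, term s := by
    intro n hn
    set E : ℕ := n + 2 * Nat.size n + 1 + c with hE
    set Tn := (allStr n).filter (fun s => ¬ Kc U s ≤ n - 2) with hTn
    have hTsub : Tn ⊆ allStr n := Finset.filter_subset _ _
    have hbound : ∀ s ∈ Tn, ((n:ℝ) - 1) * ((2:ℝ) ^ E)⁻¹ ≤ term s := by
      intro s hs
      simp only [hTn, Finset.mem_filter, mem_allStr] at hs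
      obtain ⟨hlen, hK⟩ := hs
      have hK1 : n - 1 ≤ Kc U s := by omega
      have hK2 : Kc U s ≤ E := by rw [hE, ← hlen]; exact hKle s
      have h1 : ((n:ℝ) - 1) ≤ (Kc U s : ℝ) := by
        have : ((n - 1 : ℕ) : ℝ) ≤ (Kc U s : ℝ) := Nat.cast_le.mpr hK1
        push_cast at this
        have hn1 : (1:ℝ) ≤ n := by exact_mod_cast Nat.one_le_of_lt hn
        rw [Nat.cast_sub (by omega)] at this
        · simpa using this
      have h2 : ((2:ℝ) ^ E)⁻¹ ≤ (2:ℝ) ^ (-(Kc U s : ℤ)) := by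
        rw [← zpow_natCast (2:ℝ) E, ← zpow_neg]
        exact zpow_le_zpow_right₀ one_le_two (by exact_mod_cast neg_le_neg (Int.ofNat_le.mpr hK2))
      calc ((n:ℝ) - 1) * ((2:ℝ) ^ E)⁻¹ ≤ (Kc U s : ℝ) * (2:ℝ) ^ (-(Kc U s : ℤ)) := by
            apply mul_le_mul h1 h2 (by positivity)
            exact Nat.cast_nonneg _
        _ = term s := rfl
    have hsum1 : (Tn.card : ℝ) * (((n:ℝ) - 1) * ((2:ℝ) ^ E)⁻¹) ≤ ∑ s ∈ Tn, term s := by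
      have := Finset.card_nsmul_le_sum Tn term _ hbound
      simpa [nsmul_eq_mul] using this
    have hsum2 : ∑ s ∈ Tn, term s ≤ ∑ s ∈ allStr n, term s :=
      Finset.sum_le_sum_of_subset_of_nonneg hTsub (fun s _ _ => hterm_nonneg s)
    have hcard : ((2:ℝ) ^ (n-1) : ℝ) ≤ (Tn.card : ℝ) := by
      have := hT n hn
      exact_mod_cast this
    -- numeric inequality in ℕ : 2^E ≤ 2^(n-1) * (n-1) * (2^(c+5) * n)
    have hnat : 2 ^ E ≤ 2 ^ (n-1) * (n-1) * (2 ^ (c+5) * n) := by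
      have hsz : 2 ^ Nat.size n ≤ 2 * n := two_pow_size_le n (by omega)
      have e2 : 2 ^ E = 2 ^ n * (2 ^ Nat.size n) ^ 2 * 2 ^ (1+c) := by
        rw [hE]; ring
      have e3 : 2 ^ n = 2 ^ (n-1) * 2 := by rw [← pow_succ]; congr 1; omega
      have e4 : (2 ^ Nat.size n) ^ 2 ≤ 4 * n ^ 2 := by
        calc (2 ^ Nat.size n) ^ 2 ≤ (2 * n) ^ 2 := Nat.pow_le_pow_left hsz 2
          _ = 4 * n ^ 2 := by ring
      have e5 : 2 * n ^ 2 ≤ (n-1) * (4 * n) := by nlinarith [Nat.sub_add_cancel (show 1 ≤ n by omega)]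
      calc 2 ^ E = 2 ^ n * (2 ^ Nat.size n) ^ 2 * 2 ^ (1+c) := e2
        _ ≤ 2 ^ n * (4 * n ^ 2) * 2 ^ (1+c) := by
            apply Nat.mul_le_mul_right
            exact Nat.mul_le_mul_left _ e4
        _ = 2 ^ (n-1) * (2 * n ^ 2) * (4 * 2 ^ (1+c)) := by rw [e3]; ring
        _ ≤ 2 ^ (n-1) * ((n-1) * (4 * n)) * (4 * 2 ^ (1+c)) := by
            apply Nat.mul_le_mul_right
            exact Nat.mul_le_mul_left _ e5
        _ = 2 ^ (n-1) * (n-1) * (2 ^ (c+5) * n) := by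
            rw [show (2:ℕ) ^ (c+5) = 2 ^ (1+c) * 16 by
              rw [show (16:ℕ) = 2 ^ 4 from rfl, ← pow_add]; congr 1; omega]
            ring
    have hreal : ((2:ℝ) ^ (c+5) * n)⁻¹ ≤ (2:ℝ) ^ (n-1) * (((n:ℝ) - 1) * ((2:ℝ) ^ E)⁻¹) := by
      have hpos1 : (0:ℝ) < (2:ℝ) ^ (c+5) * n := by positivity
      have hpos2 : (0:ℝ) < (2:ℝ) ^ E := by positivity
      rw [inv_eq_one_div, div_le_iff₀ hpos1]
      rw [show (2:ℝ) ^ (n-1) * (((n:ℝ) - 1) * ((2:ℝ) ^ E)⁻¹) * ((2:ℝ) ^ (c+5) * (n:ℝ))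
          = ((2:ℝ) ^ (n-1) * ((n:ℝ) - 1) * ((2:ℝ) ^ (c+5) * (n:ℝ))) / ((2:ℝ) ^ E) by ring]
      rw [le_div_iff₀ hpos2, one_mul]
      have : ((2 ^ E : ℕ) : ℝ) ≤ ((2 ^ (n-1) * (n-1) * (2 ^ (c+5) * n) : ℕ) : ℝ) :=
        Nat.cast_le.mpr hnat
      push_cast at this
      rw [Nat.cast_sub (show 1 ≤ n by omega)] at this
      push_cast at this
      linarith
    calc ((2:ℝ) ^ (c+5) * n)⁻¹
        ≤ (2:ℝ) ^ (n-1) * (((n:ℝ) - 1) * ((2:ℝ) ^ E)⁻¹) := hreal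
      _ ≤ (Tn.card : ℝ) * (((n:ℝ) - 1) * ((2:ℝ) ^ E)⁻¹) := by
          apply mul_le_mul_of_nonneg_right hcard
          have hn1 : (1:ℝ) ≤ n := by exact_mod_cast Nat.one_le_of_lt hn
          exact mul_nonneg (by linarith) (by positivity)
      _ ≤ ∑ s ∈ Tn, term s := hsum1
      _ ≤ ∑ s ∈ allStr n, term s := hsum2
  -- choose N using divergence of the harmonic series
  set d : ℝ := (2:ℝ) ^ (c+5) with hd
  have hdpos : (0:ℝ) < d := by positivity
  have hdiv : Filter.Tendsto (fun N => ∑ n ∈ Finset.range N, 1 / (n:ℝ))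
      Filter.atTop Filter.atTop :=
    (not_summable_iff_tendsto_nat_atTop_of_nonneg (fun n => by positivity)).mp
      Real.not_summable_one_div_natCast
  obtain ⟨N, hN⟩ := (hdiv.eventually_ge_atTop (d * B + 1)).exists
  refine ⟨(Finset.range N).biUnion allStr, ?_⟩
  have hdisj : (↑(Finset.range N) : Set ℕ).PairwiseDisjoint allStr := by
    intro i _ j _ hij
    simp only [Finset.disjoint_left]
    intro s hsi hsj
    exact hij ((mem_allStr.mp hsi) ▸ (mem_allStr.mp hsj) ▸ rfl)
  rw [Finset.sum_biUnion hdisj]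
  have step1 : ∀ n ∈ Finset.range N,
      (if 2 ≤ n then (d * n)⁻¹ else 0) ≤ ∑ s ∈ allStr n, term s := by
    intro n _
    split
    · exact hlen_sum n ‹2 ≤ n›
    · exact Finset.sum_nonneg fun s _ => hterm_nonneg s
  have step2 : ∑ n ∈ Finset.range N, (if 2 ≤ n then (d * n)⁻¹ else 0)
      ≤ ∑ n ∈ Finset.range N, ∑ s ∈ allStr n, term s :=
    Finset.sum_le_sum step1
  have step3 : ∑ n ∈ Finset.range N, 1/(d * (n:ℝ))
      ≤ (∑ n ∈ Finset.range N, (if 2 ≤ n then (d * n)⁻¹ else 0)) + 1/d := by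
    have hle : ∀ n ∈ Finset.range N, 1/(d * (n:ℝ))
        ≤ (if 2 ≤ n then (d * n)⁻¹ else 0) + (if n = 1 then 1/d else 0) := by
      intro n _
      rcases Nat.lt_or_ge n 2 with h | h
      · interval_cases n <;> (simp; try exact le_rfl)
      · rw [if_pos h, if_neg (by omega)]
        simp [one_div]
    calc ∑ n ∈ Finset.range N, 1/(d * (n:ℝ))
        ≤ ∑ n ∈ Finset.range N,
            ((if 2 ≤ n then (d * n)⁻¹ else 0) + (if n = 1 then 1/d else 0)) :=
          Finset.sum_le_sum hle
      _ = (∑ n ∈ Finset.range N, (if 2 ≤ n then (d * n)⁻¹ else 0))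
          + ∑ n ∈ Finset.range N, (if n = 1 then 1/d else 0) := Finset.sum_add_distrib
      _ ≤ _ := by
          gcongr
          rw [Finset.sum_ite_eq' (Finset.range N) 1 (fun _ => 1/d)]
          split
          · exact le_rfl
          · positivity
  have step4 : B + 1/d ≤ ∑ n ∈ Finset.range N, 1/(d * (n:ℝ)) := by
    have : ∑ n ∈ Finset.range N, 1/(d * (n:ℝ))
        = (1/d) * ∑ n ∈ Finset.range N, 1/(n:ℝ) := by
      rw [Finset.mul_sum]
      apply Finset.sum_congr rfl
      intro n _
      rw [one_div_mul_one_div_rev]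
      ring_nf
    rw [this]
    have h1d : (0:ℝ) < 1/d := by positivity
    calc B + 1/d = (1/d) * (d * B + 1) := by field_simp
      _ ≤ (1/d) * ∑ n ∈ Finset.range N, 1/(n:ℝ) := by
          apply mul_le_mul_of_nonneg_left _ (le_of_lt h1d)
          linarith
  have h1d : (0:ℝ) < 1/d := by positivity
  linarith

end Paper
end
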